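/- arXiv:2605.16761 — 5 statements merged into one kernel-verified Lean document; each statement's English description precedes it below -/
import Mathlib

section
/- Let γ, β, ε, A, B > 0 and f : [0,∞) → [-1,1] be measurable. Then for all L > 0 sufficiently large, the rectangle [-L,L] × [-S,S] with S = (L+β)/γ + 1 is forward invariant for the system v' = v(1 - A²/2 - B²/2 - ABf(t)) - v³/3 - w, w' = ε(v - γw + β): any solution starting in the rectangle remains in it for all positive times. -/
open Filter Set Topology

private lemma upper_stay {u : ℝ → ℝ} {τ M d : ℝ} (hd : HasDerivAt u d τ)
    (h1 : u τ ≤ M) (h2 : u τ = M → d < 0) :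
    ∀ᶠ t in 𝓝[>] τ, u t ≤ M := by
  rcases lt_or_eq_of_le h1 with h | h
  · have h3 : Filter.Tendsto u (𝓝 τ) (𝓝 (u τ)) := hd.continuousAt
    have h4 : ∀ᶠ t in 𝓝 τ, u t < M := h3.eventually_lt_const h
    exact (h4.filter_mono nhdsWithin_le_nhds).mono fun t ht => ht.le
  · have hd0 : d < 0 := h2 h
    have hs : Filter.Tendsto (slope u τ) (𝓝[≠] τ) (𝓝 d) :=
      hasDerivAt_iff_tendsto_slope.1 hd
    have h5 : ∀ᶠ t in 𝓝[≠] τ, slope u τ t < 0 := hs.eventually_lt_const hd0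
    have h6 : ∀ᶠ t in 𝓝[>] τ, slope u τ t < 0 :=
      h5.filter_mono (nhdsWithin_mono τ fun x hx => ne_of_gt hx)
    filter_upwards [h6, self_mem_nhdsWithin] with t ht htmem
    have htτ' : (0:ℝ) < t - τ := sub_pos.2 htmem
    have hlt : u t - u τ < 0 := by
      have h7 := mul_neg_of_neg_of_pos ht htτ'
      rwa [slope_def_field, div_mul_cancel₀ _ (ne_of_gt htτ')] at h7
    linarith

private lemma lower_stay {u : ℝ → ℝ} {τ m d : ℝ} (hd : HasDerivAt u d τ)
    (h1 : m ≤ u τ) (h2 : u τ = m → 0 < d) :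
    ∀ᶠ t in 𝓝[>] τ, m ≤ u t := by
  have h := upper_stay (u := fun t => -u t) (M := -m) (d := -d) hd.neg
    (by simpa using h1)
    (fun hh => by
      have : u τ = m := by
        have := congrArg Neg.neg hh; simpa using this
      linarith [h2 this])
  exact h.mono fun t ht => by simpa using ht

set_option maxHeartbeats 2000000 in
theorem stmt_6 (γ β ε A B : ℝ) (hγ : 0 < γ) (hβ : 0 < β) (hε : 0 < ε)
    (hA : 0 < A) (hB : 0 < B) (f : ℝ → ℝ) (hf : Measurable f)
    (hf1 : ∀ t, f t ∈ Set.Icc (-1 : ℝ) 1) :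
    ∃ L₀ > (0 : ℝ), ∀ L ≥ L₀,
      let S : ℝ := (L + β) / γ + 1
      ∀ v w : ℝ → ℝ,
        (∀ t ≥ (0 : ℝ),
          HasDerivAt v
            (v t * (1 - A ^ 2 / 2 - B ^ 2 / 2 - A * B * f t) - (v t) ^ 3 / 3 - w t) t
          ∧ HasDerivAt w (ε * (v t - γ * w t + β)) t) →
        v 0 ∈ Set.Icc (-L) L → w 0 ∈ Set.Icc (-S) S →
        ∀ t ≥ (0 : ℝ), v t ∈ Set.Icc (-L) L ∧ w t ∈ Set.Icc (-S) S := by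
  obtain ⟨C, hCdef⟩ : ∃ C : ℝ, C = 1 + A ^ 2 / 2 + B ^ 2 / 2 + A * B := ⟨_, rfl⟩
  obtain ⟨M, hMdef⟩ : ∃ M : ℝ, M = (1 + β) / γ + 1 := ⟨_, rfl⟩
  have hC : 0 < C := by rw [hCdef]; positivity
  have hM : 0 < M := by rw [hMdef]; positivity
  refine ⟨3 * (C + M) + 1, by linarith, ?_⟩
  intro L hL
  intro S v w hvw hv0 hw0
  have hS : S = (L + β) / γ + 1 := rfl
  clear_value S
  have hL1 : (1:ℝ) ≤ L := by linarith
  have hL0 : (0:ℝ) < L := by linarith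
  have hγS : γ * S = L + β + γ := by rw [hS]; field_simp
  have hγLM : γ * (L * M) = L + L * β + L * γ := by rw [hMdef]; field_simp
  have hSLM : S ≤ L * M := by
    have hmul : γ * S ≤ γ * (L * M) := by
      rw [hγS, hγLM]
      nlinarith [mul_le_mul_of_nonneg_right hL1 (by positivity : (0:ℝ) ≤ β + γ)]
    exact le_of_mul_le_mul_left hmul hγ
  have hL2 : 3 * (C + M) < L ^ 2 := by
    have h1 : (3 * (C + M) + 1) * 1 ≤ L * L :=
      mul_le_mul hL hL1 (by norm_num) (by linarith)
    nlinarith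
  have hkey : L * C + L * M < L ^ 3 / 3 := by
    nlinarith [mul_lt_mul_of_pos_left hL2 hL0]
  have hSpos : 0 < S := by rw [hS]; positivity
  -- the key local step
  have hstep : ∀ τ ≥ (0:ℝ), (v τ ∈ Set.Icc (-L) L ∧ w τ ∈ Set.Icc (-S) S) →
      ∀ᶠ t in 𝓝[>] τ, v t ∈ Set.Icc (-L) L ∧ w t ∈ Set.Icc (-S) S := by
    intro τ hτ0 hPτ
    obtain ⟨hv1, hv2⟩ := hPτ.1
    obtain ⟨hw1, hw2⟩ := hPτ.2
    obtain ⟨hdv, hdw⟩ := hvw τ hτ0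
    obtain ⟨hfl, hfr⟩ := hf1 τ
    have Ev2 : ∀ᶠ t in 𝓝[>] τ, v t ≤ L := by
      refine upper_stay hdv hv2 (fun h => ?_)
      rw [h]
      have hC1 : 1 - A ^ 2 / 2 - B ^ 2 / 2 - A * B * f τ ≤ C := by
        rw [hCdef]
        nlinarith [mul_nonneg (mul_pos hA hB).le (by linarith : (0:ℝ) ≤ 1 + f τ),
          sq_nonneg A, sq_nonneg B]
      have hmul := mul_le_mul_of_nonneg_left hC1 hL0.le
      linarith
    have Ev1 : ∀ᶠ t in 𝓝[>] τ, -L ≤ v t := by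
      refine lower_stay hdv hv1 (fun h => ?_)
      rw [h]
      have hC2 : 1 - A ^ 2 / 2 - B ^ 2 / 2 - A * B * f τ ≤ C := by
        rw [hCdef]
        nlinarith [mul_nonneg (mul_pos hA hB).le (by linarith : (0:ℝ) ≤ 1 + f τ),
          sq_nonneg A, sq_nonneg B]
      have hmul := mul_le_mul_of_nonneg_left hC2 hL0.le
      nlinarith
    have Ew2 : ∀ᶠ t in 𝓝[>] τ, w t ≤ S := by
      refine upper_stay hdw hw2 (fun h => ?_)
      rw [h]
      have : v τ - γ * S + β < 0 := by linarith
      exact mul_neg_of_pos_of_neg hε this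
    have Ew1 : ∀ᶠ t in 𝓝[>] τ, -S ≤ w t := by
      refine lower_stay hdw hw1 (fun h => ?_)
      rw [h]
      have : 0 < v τ - γ * (-S) + β := by nlinarith
      exact mul_pos hε this
    filter_upwards [Ev1, Ev2, Ew1, Ew2] with t h1 h2 h3 h4
    exact ⟨Set.mem_Icc.2 ⟨h1, h2⟩, Set.mem_Icc.2 ⟨h3, h4⟩⟩
  -- global argument via infimum of bad times
  intro t ht
  by_contra hP
  set Bad : Set ℝ := {s : ℝ | 0 ≤ s ∧ ¬ (v s ∈ Set.Icc (-L) L ∧ w s ∈ Set.Icc (-S) S)}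
    with hBadDef
  have hBne : Bad.Nonempty := ⟨t, ht, hP⟩
  have hbdd : BddBelow Bad := ⟨0, fun s hs => hs.1⟩
  set τ := sInf Bad with hτdef
  have hτ0 : 0 ≤ τ := le_csInf hBne fun s hs => hs.1
  have hτlb : ∀ s ∈ Bad, τ ≤ s := fun s hs => csInf_le hbdd hs
  have hgood : ∀ s, 0 ≤ s → s < τ →
      v s ∈ Set.Icc (-L) L ∧ w s ∈ Set.Icc (-S) S := by
    intro s hs0 hsτ
    by_contra hc
    exact absurd (hτlb s ⟨hs0, hc⟩) (not_le.2 hsτ)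
  have hPτ : v τ ∈ Set.Icc (-L) L ∧ w τ ∈ Set.Icc (-S) S := by
    rcases eq_or_lt_of_le hτ0 with h0 | h0
    · rw [← h0]; exact ⟨hv0, hw0⟩
    · have hvc : Filter.Tendsto v (𝓝[<] τ) (𝓝 (v τ)) :=
        ((hvw τ hτ0).1.continuousAt.continuousWithinAt : ContinuousWithinAt v (Set.Iio τ) τ)
      have hwc : Filter.Tendsto w (𝓝[<] τ) (𝓝 (w τ)) :=
        ((hvw τ hτ0).2.continuousAt.continuousWithinAt : ContinuousWithinAt w (Set.Iio τ) τ)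
      have hIoo : Set.Ioo (0:ℝ) τ ∈ 𝓝[<] τ :=
        Ioo_mem_nhdsLT_of_mem ⟨h0, le_refl τ⟩
      constructor
      · refine isClosed_Icc.mem_of_tendsto hvc ?_
        filter_upwards [hIoo] with s hs
        exact (hgood s hs.1.le hs.2).1
      · refine isClosed_Icc.mem_of_tendsto hwc ?_
        filter_upwards [hIoo] with s hs
        exact (hgood s hs.1.le hs.2).2
  have Ev : ∀ᶠ s in 𝓝[>] τ, v s ∈ Set.Icc (-L) L ∧ w s ∈ Set.Icc (-S) S :=
    hstep τ hτ0 hPτ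
  have Ev2 : ∀ᶠ s in 𝓝[>] τ, s ∉ Bad := by
    filter_upwards [Ev] with s hs
    exact fun hb => hb.2 hs
  obtain ⟨u', hu', hsub⟩ := mem_nhdsGT_iff_exists_Ioo_subset.1 Ev2
  have hτnb : τ ∉ Bad := fun hb => hb.2 hPτ
  have hub : u' ≤ τ := by
    refine le_csInf hBne ?_
    intro b hb
    by_contra hbu
    push_neg at hbu
    have hbτ : τ ≤ b := hτlb b hb
    rcases eq_or_lt_of_le hbτ with h | h
    · exact hτnb (h ▸ hb)
    · exact (hsub ⟨h, hbu⟩) hb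
  exact absurd hub (not_le.2 hu')
end

section
/- Let r ∈ ℝ, γ, β > 0. The cubic equation v³ - 3(r - 1/γ)v + 3β/γ = 0 has exactly one real root in (-∞, 0), i.e., there is a unique negative real v with v³ - 3(r - 1/γ)v + 3β/γ = 0. -/
theorem stmt_7 (r γ β : ℝ) (hγ : 0 < γ) (hβ : 0 < β) :
    ∃! v : ℝ, v < 0 ∧ v ^ 3 - 3 * (r - 1 / γ) * v + 3 * β / γ = 0 := by
  set a : ℝ := r - 1 / γ with ha
  set c : ℝ := 3 * β / γ with hc
  have hcpos : 0 < c := by positivity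
  set f : ℝ → ℝ := fun v => v ^ 3 - 3 * a * v + c with hf
  set m : ℝ := |3 * a| + c + 1 with hm
  have hm1 : 1 ≤ m := by
    have := abs_nonneg (3 * a); linarith
  have hmc : c ≤ m := by
    have := abs_nonneg (3 * a); linarith
  have hfm : f (-m) < 0 := by
    have h1 : 3 * a * m ≤ |3 * a| * m := by
      have := le_abs_self (3 * a)
      nlinarith
    have : f (-m) = -(m ^ 3) + 3 * a * m + c := by ring
    have h2 : |3 * a| * m ≤ (m - c - 1) * m := by
      have : |3 * a| ≤ m - c - 1 := by linarith
      nlinarith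
    rw [this]
    nlinarith [sq_nonneg m, mul_pos hcpos (show (0:ℝ) < m - 1 + 1 by linarith)]
  have hf0 : f 0 = c := by simp [hf]
  have hcont : ContinuousOn f (Set.Icc (-m) 0) := by
    apply Continuous.continuousOn; fun_prop
  have hle : (-m : ℝ) ≤ 0 := by linarith
  have hIVT := intermediate_value_Icc hle hcont
  have h0mem : (0 : ℝ) ∈ Set.Icc (f (-m)) (f 0) := by
    constructor
    · linarith
    · rw [hf0]; linarith
  obtain ⟨v, hvmem, hveq⟩ := hIVT h0mem
  have hvneg : v < 0 := by
    rcases lt_or_eq_of_le hvmem.2 with h | h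
    · exact h
    · exfalso; rw [h] at hveq; rw [hf0] at hveq; linarith
  refine ⟨v, ⟨hvneg, hveq⟩, ?_⟩
  rintro w ⟨hwneg, hweq⟩
  by_contra hne
  -- two distinct negative roots w and v: derive contradiction
  have hveq' : v ^ 3 - 3 * a * v + c = 0 := hveq
  have hweq' : w ^ 3 - 3 * a * w + c = 0 := hweq
  have hsub : (w - v) * (w ^ 2 + w * v + v ^ 2 - 3 * a) = 0 := by nlinarith
  have hwv : w - v ≠ 0 := sub_ne_zero.mpr hne
  have hkey : w ^ 2 + w * v + v ^ 2 - 3 * a = 0 := by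
    rcases mul_eq_zero.mp hsub with h | h
    · exact absurd h hwv
    · exact h
  -- then c = w*v*(w+v) < 0, contradiction
  nlinarith [mul_pos (mul_pos (neg_pos.mpr hwneg) (neg_pos.mpr hvneg)) (by linarith : 0 < -(w + v))]
end

section
/- Let ε, γ > 0, r ∈ ℝ, v_e < 0 with r < v_e², and set M = (v_e² - r)²/(2v_e²). Then the sublevel set {(ṽ,w̃) : ṽ²/2 + w̃²/(2ε) ≤ M} is forward invariant for the system ṽ' = (r - v_e²)ṽ - v_e ṽ² - ṽ³/3 - w̃, w̃' = ε(ṽ - γw̃), and every solution starting in it converges to the origin as t → ∞. -/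
open Filter Set Real Topology

set_option maxHeartbeats 1000000 in
theorem stmt_12 (ε γ r ve : ℝ) (hε : 0 < ε) (hγ : 0 < γ)
    (hve : ve < 0) (hr : r < ve ^ 2) :
    let M : ℝ := (ve ^ 2 - r) ^ 2 / (2 * ve ^ 2)
    ∀ v w : ℝ → ℝ,
      (∀ t ≥ (0 : ℝ),
        HasDerivAt v ((r - ve ^ 2) * v t - ve * (v t) ^ 2 - (v t) ^ 3 / 3 - w t) t
        ∧ HasDerivAt w (ε * (v t - γ * w t)) t) →
      (v 0) ^ 2 / 2 + (w 0) ^ 2 / (2 * ε) ≤ M →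
      (∀ t ≥ (0 : ℝ), (v t) ^ 2 / 2 + (w t) ^ 2 / (2 * ε) ≤ M)
      ∧ Filter.Tendsto (fun t => (v t, w t)) Filter.atTop
          (nhds ((0 : ℝ), (0 : ℝ))) := by
  intro M v w hd h0
  have hve0 : ve ≠ 0 := ne_of_lt hve
  have hve2 : (0:ℝ) < ve ^ 2 := by positivity
  have hA : (0:ℝ) < ve ^ 2 - r := by linarith
  have hM : (0:ℝ) < M := by
    have h : (0:ℝ) < (ve ^ 2 - r) ^ 2 := by positivity
    exact div_pos h (by positivity)
  have hM2 : 2 * M * ve ^ 2 = (ve ^ 2 - r) ^ 2 := by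
    simp only [M]
    field_simp
  clear_value M
  -- the Lyapunov function and its derivative along trajectories
  obtain ⟨g, hgdef⟩ : ∃ g : ℝ → ℝ, g = fun t => (v t) ^ 2 / 2 + (w t) ^ 2 / (2 * ε) :=
    ⟨_, rfl⟩
  obtain ⟨D, hDdef⟩ : ∃ D : ℝ → ℝ, D = fun t =>
      (v t) ^ 2 * (r - ve ^ 2 - ve * v t - (v t) ^ 2 / 3) - γ * (w t) ^ 2 := ⟨_, rfl⟩
  have hg0 : g 0 ≤ M := by simp only [hgdef]; exact h0
  have hg : ∀ t ≥ (0:ℝ), HasDerivAt g (D t) t := by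
    intro t ht
    obtain ⟨hv, hw⟩ := hd t ht
    have h1 : HasDerivAt (fun s => (v s) ^ 2 / 2)
        ((2 * v t ^ (2-1) * ((r - ve ^ 2) * v t - ve * (v t) ^ 2 - (v t) ^ 3 / 3 - w t)) / 2) t :=
      (hv.pow 2).div_const 2
    have h2 : HasDerivAt (fun s => (w s) ^ 2 / (2 * ε))
        ((2 * w t ^ (2-1) * (ε * (v t - γ * w t))) / (2 * ε)) t :=
      (hw.pow 2).div_const (2 * ε)
    have h3 := h1.add h2
    rw [hgdef, hDdef]
    refine h3.congr_deriv ?_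
    have hε' : ε ≠ 0 := ne_of_gt hε
    field_simp
    ring
  have hgcont : ∀ t ≥ (0:ℝ), ContinuousAt g t := fun t ht => (hg t ht).continuousAt
  have hgnonneg : ∀ t, 0 ≤ g t := by
    intro t
    simp only [hgdef]
    positivity
  -- the decay constant
  obtain ⟨c₁, hc₁def⟩ : ∃ c₁ : ℝ, c₁ = min (2 * M / 3) (3 * ve ^ 2 / 4) := ⟨_, rfl⟩
  have hc₁ : 0 < c₁ := hc₁def ▸ lt_min (by linarith) (by linarith)
  obtain ⟨c, hcdef⟩ : ∃ c : ℝ, c = min (2 * c₁) (2 * ε * γ) := ⟨_, rfl⟩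
  have hc : 0 < c := hcdef ▸ lt_min (by linarith) (by positivity)
  have hc2 : c ≤ 2 * ε * γ := hcdef ▸ min_le_right _ _
  have hc3 : c ≤ 2 * c₁ := hcdef ▸ min_le_left _ _
  -- key differential inequality on the sublevel set
  have key0 : ∀ x y : ℝ, x ^ 2 / 2 + y ^ 2 / (2 * ε) ≤ M →
      x ^ 2 * (r - ve ^ 2 - ve * x - x ^ 2 / 3) - γ * y ^ 2
        ≤ -c * (x ^ 2 / 2 + y ^ 2 / (2 * ε)) := by
    intro x y hgt
    have hy2 : (0:ℝ) ≤ y ^ 2 / (2 * ε) := by positivity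
    have hx2 : x ^ 2 ≤ 2 * M := by linarith
    have hbx2 : ((-ve) * x) ^ 2 ≤ (ve ^ 2 - r) ^ 2 := by
      nlinarith [mul_le_mul_of_nonneg_left hx2 hve2.le]
    have hxb : (-ve) * x ≤ ve ^ 2 - r := by
      rcases le_or_gt ((-ve) * x) 0 with h | h
      · linarith
      · nlinarith [mul_pos h (by linarith : (0:ℝ) < (-ve) * x + (ve ^ 2 - r))]
    -- the cubic bracket is at most -c₁
    have hf : r - ve ^ 2 - ve * x - x ^ 2 / 3 ≤ -c₁ := by
      rw [hc₁def]
      rcases le_total (2 * M / 3) (3 * ve ^ 2 / 4) with h | h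
      · rw [min_eq_left h]
        have hAsq : (ve ^ 2 - r) ^ 2 ≤ (3 * ve ^ 2 / 2) ^ 2 := by
          nlinarith [mul_le_mul_of_nonneg_right (by linarith : 8 * M ≤ 9 * ve ^ 2) hve2.le, hM2]
        have hC : (0:ℝ) < 3 * ve ^ 2 / 2 := by positivity
        have hAle : ve ^ 2 - r ≤ 3 * ve ^ 2 / 2 := by nlinarith [hAsq, hA, hC]
        have h1 : 0 ≤ (ve ^ 2 - r) - (-ve) * x := by linarith
        have h2 : 0 ≤ 3 * ve ^ 2 - (ve ^ 2 - r) - (-ve) * x := by linarith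
        have h3 : ve ^ 2 * (3 * (r - ve ^ 2 - ve * x - x ^ 2 / 3) + 2 * M) ≤ 0 := by
          nlinarith [mul_nonneg h1 h2, hM2]
        have h4 : 3 * (r - ve ^ 2 - ve * x - x ^ 2 / 3) + 2 * M ≤ 0 := by
          have h5 := (mul_le_mul_iff_right₀ hve2).mp
            (by linarith : ve ^ 2 * (3 * (r - ve ^ 2 - ve * x - x ^ 2 / 3) + 2 * M) ≤ ve ^ 2 * 0)
          linarith
        linarith
      · rw [min_eq_right h]
        have hAsq : (3 * ve ^ 2 / 2) ^ 2 ≤ (ve ^ 2 - r) ^ 2 := by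
          nlinarith [mul_le_mul_of_nonneg_right (by linarith : 9 * ve ^ 2 ≤ 8 * M) hve2.le, hM2]
        have hC : (0:ℝ) < 3 * ve ^ 2 / 2 := by positivity
        have hAge : 3 * ve ^ 2 / 2 ≤ ve ^ 2 - r := by nlinarith [hAsq, hA, hC]
        linarith [sq_nonneg (2 * x + 3 * ve)]
    have h5 : x ^ 2 * (r - ve ^ 2 - ve * x - x ^ 2 / 3) ≤ -c₁ * x ^ 2 := by
      linarith [mul_le_mul_of_nonneg_left hf (sq_nonneg x)]
    have h6 : c * (y ^ 2 / (2 * ε)) ≤ γ * y ^ 2 := by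
      rw [mul_div_assoc', div_le_iff₀ (by positivity)]
      nlinarith [mul_le_mul_of_nonneg_right hc2 (sq_nonneg y)]
    have h8 : -c₁ * x ^ 2 ≤ -(c * (x ^ 2 / 2)) := by
      linarith [mul_le_mul_of_nonneg_right hc3 (sq_nonneg x)]
    have h9 : -c * (x ^ 2 / 2 + y ^ 2 / (2 * ε))
        = -(c * (x ^ 2 / 2)) + -(c * (y ^ 2 / (2 * ε))) := by ring
    rw [h9]
    linarith
  have key : ∀ t : ℝ, g t ≤ M → D t ≤ -c * g t := by
    intro t hgt
    rw [hgdef] at hgt ⊢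
    rw [hDdef]
    exact key0 (v t) (w t) hgt
  -- forward invariance
  have inv : ∀ t ≥ (0:ℝ), g t ≤ M := by
    by_contra hcon
    push_neg at hcon
    obtain ⟨t₀, ht₀, hgt₀⟩ := hcon
    set S : Set ℝ := Icc 0 t₀ ∩ g ⁻¹' (Iic M) with hSdef
    have hScl : IsClosed S :=
      ContinuousOn.preimage_isClosed_of_isClosed
        (fun t ht => (hgcont t ht.1).continuousWithinAt) isClosed_Icc isClosed_Iic
    have hSne : S.Nonempty := ⟨0, ⟨le_refl 0, ht₀⟩, hg0⟩
    have hSbdd : BddAbove S := ⟨t₀, fun x hx => hx.1.2⟩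
    set t₁ := sSup S with ht₁def
    have ht₁S : t₁ ∈ S := hScl.csSup_mem hSne hSbdd
    have ht₁0 : 0 ≤ t₁ := ht₁S.1.1
    have hgt₁ : g t₁ ≤ M := ht₁S.2
    have ht₁lt : t₁ < t₀ := lt_of_le_of_ne ht₁S.1.2 (by
      intro h; rw [h] at hgt₁; linarith)
    have hIoo : ∀ᶠ s in 𝓝[>] t₁, s ∈ Ioo t₁ t₀ := Ioo_mem_nhdsGT ht₁lt
    -- produce a point of S beyond t₁, contradiction
    have hcontra : ∃ t₂, t₂ ∈ S ∧ t₁ < t₂ := by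
      rcases lt_or_eq_of_le hgt₁ with hlt | heq
      · -- g t₁ < M : use continuity
        have hev : ∀ᶠ s in 𝓝 t₁, g s < M :=
          (hgcont t₁ ht₁0).eventually_lt continuousAt_const hlt
        have hev' : ∀ᶠ s in 𝓝[>] t₁, g s < M := nhdsWithin_le_nhds hev
        obtain ⟨t₂, ht₂M, ht₂I⟩ := (hev'.and hIoo).exists
        exact ⟨t₂, ⟨⟨le_trans ht₁0 ht₂I.1.le, ht₂I.2.le⟩, show g t₂ ≤ M from le_of_lt ht₂M⟩, ht₂I.1⟩
      · -- g t₁ = M : derivative is negative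
        have hDneg : D t₁ < 0 := by
          have h1 := key t₁ hgt₁
          nlinarith
        have hslope : Tendsto (slope g t₁) (𝓝[>] t₁) (𝓝 (D t₁)) :=
          ((hasDerivAt_iff_tendsto_slope.mp (hg t₁ ht₁0)).mono_left
            (nhdsWithin_mono _ (fun s hs => ne_of_gt hs)))
        have hev : ∀ᶠ s in 𝓝[>] t₁, slope g t₁ s < 0 := by
          have h2 : Iio (0:ℝ) ∈ 𝓝 (D t₁) := Iio_mem_nhds hDneg
          exact hslope.eventually h2
        obtain ⟨t₂, ht₂M, ht₂I⟩ := (hev.and hIoo).exists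
        have hnum : g t₂ - g t₁ < 0 := by
          have hpos : 0 < t₂ - t₁ := by linarith [ht₂I.1]
          rw [slope_def_field] at ht₂M
          rcases div_neg_iff.mp ht₂M with ⟨h3, h4⟩ | ⟨h3, h4⟩
          · linarith
          · linarith
        exact ⟨t₂, ⟨⟨le_trans ht₁0 ht₂I.1.le, ht₂I.2.le⟩, show g t₂ ≤ M by linarith⟩, ht₂I.1⟩
    obtain ⟨t₂, ht₂S, ht₂gt⟩ := hcontra
    exact absurd (le_csSup hSbdd ht₂S) (not_le.mpr ht₂gt)
  refine ⟨fun t ht => by simpa [hgdef] using inv t ht, ?_⟩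
  -- exponential decay via the auxiliary function g t * exp (c t)
  have hh : ∀ t ≥ (0:ℝ), HasDerivAt (fun s => g s * Real.exp (c * s))
      ((D t + c * g t) * Real.exp (c * t)) t := by
    intro t ht
    have hE : HasDerivAt (fun s => Real.exp (c * s)) (Real.exp (c * t) * c) t := by
      have h1 : HasDerivAt (fun s : ℝ => c * s) c t := by
        simpa using (hasDerivAt_id t).const_mul c
      exact h1.exp
    have h2 := (hg t ht).mul hE
    refine h2.congr_deriv ?_
    ring
  have hanti : AntitoneOn (fun s => g s * Real.exp (c * s)) (Ici 0) := by
    apply antitoneOn_of_hasDerivWithinAt_nonpos (convex_Ici 0)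
      (f' := fun t => (D t + c * g t) * Real.exp (c * t))
    · exact fun t ht => ((hh t ht).continuousAt).continuousWithinAt
    · intro t ht
      rw [interior_Ici] at ht
      exact ((hh t ht.le).hasDerivWithinAt)
    · intro t ht
      rw [interior_Ici] at ht
      have h1 := key t (inv t ht.le)
      have h2 : D t + c * g t ≤ 0 := by linarith
      have h3 : (0:ℝ) < Real.exp (c * t) := Real.exp_pos _
      nlinarith
  have hbound : ∀ t ≥ (0:ℝ), g t ≤ M * Real.exp (-(c * t)) := by
    intro t ht
    have h1 : g t * Real.exp (c * t) ≤ g 0 * Real.exp (c * 0) :=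
      hanti self_mem_Ici ht ht
    have h2 : g t * Real.exp (c * t) ≤ M := by
      simpa using h1.trans (by simpa using hg0)
    rw [Real.exp_neg, ← div_eq_mul_inv, le_div_iff₀ (Real.exp_pos _)]
    exact h2
  -- convergence
  have hexp : Tendsto (fun t : ℝ => M * Real.exp (-(c * t))) atTop (𝓝 0) := by
    have h1 : Tendsto (fun t : ℝ => c * t) atTop atTop :=
      (tendsto_const_mul_atTop_of_pos hc).mpr tendsto_id
    have h2 : Tendsto (fun t : ℝ => -(c * t)) atTop atBot := tendsto_neg_atTop_atBot.comp h1
    have h3 := Real.tendsto_exp_atBot.comp h2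
    have h4 := h3.const_mul M
    simpa using h4
  have hgto : Tendsto g atTop (𝓝 0) := by
    refine tendsto_of_tendsto_of_tendsto_of_le_of_le' tendsto_const_nhds hexp
      (Eventually.of_forall hgnonneg) ?_
    exact (eventually_ge_atTop 0).mono hbound
  have hv2 : Tendsto (fun t => (v t) ^ 2) atTop (𝓝 0) := by
    have h2 : Tendsto (fun t => 2 * g t) atTop (𝓝 0) := by
      simpa using hgto.const_mul 2
    refine tendsto_of_tendsto_of_tendsto_of_le_of_le tendsto_const_nhds h2
      (fun t => sq_nonneg _) ?_
    intro t
    have h3 : (0:ℝ) ≤ (w t) ^ 2 / (2 * ε) := by positivity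
    simp only [hgdef]
    linarith
  have hw2 : Tendsto (fun t => (w t) ^ 2) atTop (𝓝 0) := by
    have h2 : Tendsto (fun t => (2 * ε) * g t) atTop (𝓝 0) := by
      simpa using hgto.const_mul (2 * ε)
    refine tendsto_of_tendsto_of_tendsto_of_le_of_le tendsto_const_nhds h2
      (fun t => sq_nonneg _) ?_
    intro t
    have h3 : (0:ℝ) ≤ (v t) ^ 2 / 2 := by positivity
    have h4 : (w t) ^ 2 / (2 * ε) ≤ g t := by simp only [hgdef]; linarith
    have h6 := mul_le_mul_of_nonneg_left h4 (by positivity : (0:ℝ) ≤ 2 * ε)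
    have h5 : (2 * ε) * ((w t) ^ 2 / (2 * ε)) = (w t) ^ 2 := by
      field_simp
    rw [h5] at h6
    exact h6
  have hv : Tendsto v atTop (𝓝 0) := by
    rw [tendsto_zero_iff_abs_tendsto_zero]
    have h1 := (Real.continuous_sqrt.tendsto 0).comp hv2
    simpa [Function.comp_def, Real.sqrt_sq_eq_abs] using h1
  have hw : Tendsto w atTop (𝓝 0) := by
    rw [tendsto_zero_iff_abs_tendsto_zero]
    have h1 := (Real.continuous_sqrt.tendsto 0).comp hw2
    simpa [Function.comp_def, Real.sqrt_sq_eq_abs] using h1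
  exact hv.prodMk_nhds hw
end

section
/- Let A, B > 0 with A + B < √2 and suppose that for each c ∈ [-1,1] the curves {w = r(c)v - v³/3} and {w = (v+β)/γ} (γ, β > 0) admit a unique intersection point (v_e(c), w_e(c)) with v_e(c) < 0. Then v_e and w_e are monotonically increasing functions of c on [-1,1]. -/
theorem stmt_13 (A B γ β : ℝ) (hA : 0 < A) (hB : 0 < B)
    (hAB : A + B < Real.sqrt 2) (hγ : 0 < γ) (hβ : 0 < β)
    (ve we : ℝ → ℝ)
    (huniq : ∀ c ∈ Set.Icc (-1 : ℝ) 1,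
      ∃! p : ℝ × ℝ,
        p.2 = (1 - A ^ 2 / 2 - B ^ 2 / 2 - c * A * B) * p.1 - p.1 ^ 3 / 3
        ∧ p.2 = (p.1 + β) / γ)
    (hmem : ∀ c ∈ Set.Icc (-1 : ℝ) 1,
      we c = (1 - A ^ 2 / 2 - B ^ 2 / 2 - c * A * B) * ve c - (ve c) ^ 3 / 3
      ∧ we c = (ve c + β) / γ ∧ ve c < 0) :
    MonotoneOn ve (Set.Icc (-1) 1) ∧ MonotoneOn we (Set.Icc (-1) 1) := by
  have key : MonotoneOn ve (Set.Icc (-1 : ℝ) 1) := by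
    intro c1 hc1 c2 hc2 hle
    obtain ⟨h1a, h1b, h1c⟩ := hmem c1 hc1
    obtain ⟨h2a, h2b, h2c⟩ := hmem c2 hc2
    by_contra hlt
    push_neg at hlt
    set v1 := ve c1
    set v2 := ve c2
    have e1 : γ * ((1 - A ^ 2 / 2 - B ^ 2 / 2 - c1 * A * B) * v1 - v1 ^ 3 / 3)
        = v1 + β := by
      have := h1a.symm.trans h1b
      field_simp at this ⊢
      linarith
    have e2 : γ * ((1 - A ^ 2 / 2 - B ^ 2 / 2 - c2 * A * B) * v2 - v2 ^ 3 / 3)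
        = v2 + β := by
      have := h2a.symm.trans h2b
      field_simp at this ⊢
      linarith
    have hr : 0 ≤ (c2 - c1) * (A * B) :=
      mul_nonneg (sub_nonneg.mpr hle) (by positivity)
    have hvv : 0 < v1 * v2 := mul_pos_of_neg_of_neg h1c h2c
    have t1 := congrArg (fun x => x * v2) e1
    have t2 := congrArg (fun x => x * v1) e2
    have P1 : 0 ≤ γ * ((c2 - c1) * (A * B)) * (v1 * v2) :=
      mul_nonneg (mul_nonneg hγ.le hr) hvv.le
    have P2 : 0 < γ * (v1 * v2) * ((v1 - v2) * (-(v1 + v2))) := by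
      apply mul_pos (mul_pos hγ hvv)
      apply mul_pos (sub_pos.mpr hlt)
      linarith
    have P3 : β * (v2 - v1) < 0 := by nlinarith
    nlinarith [t1, t2, P1, P2, P3]
  refine ⟨key, ?_⟩
  intro c1 hc1 c2 hc2 hle
  rw [(hmem c1 hc1).2.1, (hmem c2 hc2).2.1]
  have := key hc1 hc2 hle
  gcongr
end

section
/- Let γ, β, κ, A, B > 0 and c ∈ (-1,1) with r(c) := 1 - A²/2 - B²/2 - cAB > 0. Set v_m(c) = -√(r(c)), w_m(c) = -(2/3)r(c)^{3/2}. If v_m(c)·ABκ·√(1-c²) > v_m(c) - γ·w_m(c) + β, then there is no C¹ function s ↦ (v(s), w(s)) on any interval [s₀, s₀+δ], δ > 0, satisfying 0 = v(s)·r(cos(κs)) - v(s)³/3 - w(s), dw/ds = v - γw + β, v(s₀) = v_m(c), w(s₀) = w_m(c), and v(s) ≤ v_m(cos(κs)) for all s, where cos(κs₀) = c and sin(κs₀) > 0. -/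
lemma cubic_aux (r x : ℝ) (hx : x ≤ -Real.sqrt r) :
    -(2/3) * (Real.sqrt r)^3 ≤ x * r - x^3/3 := by
  rcases le_or_gt r 0 with h | h
  · have h0 : Real.sqrt r = 0 := Real.sqrt_eq_zero_of_nonpos h
    rw [h0] at hx ⊢
    have hx0 : x ≤ 0 := by linarith
    nlinarith [mul_nonneg_of_nonpos_of_nonpos hx0 h, pow_nonneg (neg_nonneg.2 hx0) 3]
  · have hq : Real.sqrt r ^ 2 = r := Real.sq_sqrt h.le
    have hqn : 0 ≤ Real.sqrt r := Real.sqrt_nonneg r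
    nlinarith [mul_nonneg (sq_nonneg (x + Real.sqrt r)) (by linarith : (0:ℝ) ≤ -x + 2 * Real.sqrt r)]

theorem stmt_18 (γ β κ A B c s₀ : ℝ) (hγ : 0 < γ) (hβ : 0 < β) (hκ : 0 < κ)
    (hA : 0 < A) (hB : 0 < B) (hc : c ∈ Set.Ioo (-1 : ℝ) 1)
    (hr : 0 < 1 - A ^ 2 / 2 - B ^ 2 / 2 - c * A * B)
    (hs₀c : Real.cos (κ * s₀) = c) (hs₀s : 0 < Real.sin (κ * s₀))
    (hesc :
      (-Real.sqrt (1 - A ^ 2 / 2 - B ^ 2 / 2 - c * A * B)) * (A * B) * κ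
          * Real.sqrt (1 - c ^ 2)
        > (-Real.sqrt (1 - A ^ 2 / 2 - B ^ 2 / 2 - c * A * B))
          - γ * (-(2 / 3) * Real.sqrt (1 - A ^ 2 / 2 - B ^ 2 / 2 - c * A * B) ^ 3)
          + β) :
    ¬ ∃ δ > (0 : ℝ), ∃ v w : ℝ → ℝ,
      ContDiffOn ℝ 1 v (Set.Icc s₀ (s₀ + δ)) ∧
      ContDiffOn ℝ 1 w (Set.Icc s₀ (s₀ + δ)) ∧
      (∀ s ∈ Set.Icc s₀ (s₀ + δ),
        v s * (1 - A ^ 2 / 2 - B ^ 2 / 2 - Real.cos (κ * s) * A * B)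
            - (v s) ^ 3 / 3 - w s = 0
        ∧ HasDerivAt w (v s - γ * w s + β) s
        ∧ v s ≤ -Real.sqrt (1 - A ^ 2 / 2 - B ^ 2 / 2 - Real.cos (κ * s) * A * B))
      ∧ v s₀ = -Real.sqrt (1 - A ^ 2 / 2 - B ^ 2 / 2 - c * A * B)
      ∧ w s₀ = -(2 / 3) * Real.sqrt (1 - A ^ 2 / 2 - B ^ 2 / 2 - c * A * B) ^ 3 := by
  rintro ⟨δ, hδ, v, w, _, _, hsys, hv0, hw0⟩
  set u : ℝ := 1 - A ^ 2 / 2 - B ^ 2 / 2 - c * A * B with hu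
  set f : ℝ → ℝ := fun s => 1 - A ^ 2 / 2 - B ^ 2 / 2 - Real.cos (κ * s) * A * B with hf
  have hf₀ : f s₀ = u := by simp [hf, hs₀c, hu]
  set h : ℝ → ℝ := fun s => -(2/3) * (Real.sqrt (f s))^3 with hh
  have hmem₀ : s₀ ∈ Set.Icc s₀ (s₀ + δ) := ⟨le_refl _, by linarith⟩
  obtain ⟨halg₀, hderiv₀, hle₀⟩ := hsys s₀ hmem₀
  -- w ≥ h on the interval
  have hwge : ∀ s ∈ Set.Icc s₀ (s₀ + δ), h s ≤ w s := by
    intro s hs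
    obtain ⟨halg, _, hle⟩ := hsys s hs
    have : w s = v s * f s - (v s)^3/3 := by simp only [hf]; linarith
    rw [this]
    exact cubic_aux (f s) (v s) hle
  have hF0 : w s₀ - h s₀ = 0 := by
    rw [hw0, hh]; simp [hf₀]
  -- derivative of f at s₀
  have hcos : HasDerivAt (fun s : ℝ => Real.cos (κ * s)) (-Real.sin (κ * s₀) * κ) s₀ := by
    have h1 : HasDerivAt (fun s : ℝ => κ * s) κ s₀ := by
      simpa using (hasDerivAt_id s₀).const_mul κ
    exact (Real.hasDerivAt_cos (κ * s₀)).comp s₀ h1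
  have hfd : HasDerivAt f (Real.sin (κ * s₀) * κ * (A * B)) s₀ := by
    have := (hasDerivAt_const s₀ (1 - A ^ 2 / 2 - B ^ 2 / 2)).sub ((hcos.mul_const A).mul_const B)
    exact this.congr_deriv (by ring)
  have hu0 : (0:ℝ) < u := hr
  have hfne : f s₀ ≠ 0 := by rw [hf₀]; exact ne_of_gt hu0
  have hsq : HasDerivAt (fun s => Real.sqrt (f s))
      (1 / (2 * Real.sqrt (f s₀)) * (Real.sin (κ * s₀) * κ * (A * B))) s₀ :=
    (Real.hasDerivAt_sqrt hfne).comp s₀ hfd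
  have hcube : HasDerivAt (fun s => (Real.sqrt (f s))^3)
      (3 * (Real.sqrt (f s₀))^2 * (1 / (2 * Real.sqrt (f s₀)) * (Real.sin (κ * s₀) * κ * (A * B)))) s₀ := by
    simpa using hsq.fun_pow 3
  have hhd : HasDerivAt h (-Real.sqrt u * (Real.sin (κ * s₀) * κ * (A * B))) s₀ := by
    have := hcube.const_mul (-(2/3) : ℝ)
    refine this.congr_deriv (Eq.symm ?_)
    rw [hf₀]
    have hsu : Real.sqrt u ≠ 0 := by positivity
    have hsq2 : Real.sqrt u ^ 2 = u := Real.sq_sqrt hu0.le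
    field_simp
  -- the difference F has nonnegative right derivative at s₀
  set D : ℝ := (v s₀ - γ * w s₀ + β) - (-Real.sqrt u * (Real.sin (κ * s₀) * κ * (A * B))) with hD
  have hFd : HasDerivWithinAt (fun s => w s - h s) D (Set.Icc s₀ (s₀ + δ)) s₀ :=
    (hderiv₀.sub hhd).hasDerivWithinAt
  have hDnn : 0 ≤ D := by
    have hslope : Filter.Tendsto (slope (fun s => w s - h s) s₀)
        (nhdsWithin s₀ (Set.Icc s₀ (s₀ + δ) \ {s₀})) (nhds D) :=
      hasDerivWithinAt_iff_tendsto_slope.mp hFd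
    have hmono : nhdsWithin s₀ (Set.Ioo s₀ (s₀ + δ)) ≤
        nhdsWithin s₀ (Set.Icc s₀ (s₀ + δ) \ {s₀}) := by
      apply nhdsWithin_mono
      rintro x ⟨h1, h2⟩
      exact ⟨⟨h1.le, h2.le⟩, ne_of_gt h1⟩
    have hne : (nhdsWithin s₀ (Set.Ioo s₀ (s₀ + δ))).NeBot :=
      left_nhdsWithin_Ioo_neBot (by linarith)
    refine ge_of_tendsto (hslope.mono_left hmono) ?_
    filter_upwards [self_mem_nhdsWithin] with x hx
    have hx' : s₀ < x := hx.1
    have hxm : x ∈ Set.Icc s₀ (s₀ + δ) := ⟨hx.1.le, hx.2.le⟩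
    rw [slope_def_field]
    have hnum : 0 ≤ (w x - h x) - (w s₀ - h s₀) := by
      rw [hF0]; linarith [hwge x hxm]
    exact div_nonneg hnum (by linarith)
  -- compute sin and derive contradiction
  have hsin : Real.sin (κ * s₀) = Real.sqrt (1 - c ^ 2) := by
    have h1 : Real.sin (κ * s₀) ^ 2 = 1 - c ^ 2 := by
      have := Real.sin_sq_add_cos_sq (κ * s₀)
      rw [hs₀c] at this; linarith
    rw [← h1, Real.sqrt_sq hs₀s.le]
  have : D < 0 := by
    rw [hD, hv0, hw0, hsin]
    have := hesc
    nlinarith [this]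
  linarith
end
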